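/- Let (𝒴,ℓ) be a separable near-metric value space with 0 < ℓ̄ < ∞. If (𝒴,ℓ) is totally bounded, then SUOL_{(𝒳,ρ,𝒴,ℓ)} = SUOL_{(𝒳,ρ,{0,1},ℓ01)}. If (𝒴,ℓ) is not totally bounded, then SUOL_{(𝒳,ρ,𝒴,ℓ)} = SUOL_{(𝒳,ρ,ℕ,ℓ01)}. -/

import Mathlib

open MeasureTheory Filter Topology

/-- A near-metric loss structure on `Y`: symmetric, point-discerning, with a
relaxed triangle inequality with constant `c`. -/
structure NearMetric (Y : Type) where
  loss : Y → Y → ℝ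
  nonneg : ∀ y₁ y₂, 0 ≤ loss y₁ y₂
  symm : ∀ y₁ y₂, loss y₁ y₂ = loss y₂ y₁
  eq_zero_iff : ∀ y₁ y₂, loss y₁ y₂ = 0 ↔ y₁ = y₂
  c : ℝ
  c_nonneg : 0 ≤ c
  triangle : ∀ y₁ y₂ y₃, loss y₁ y₃ ≤ c * (loss y₂ y₁ + loss y₂ y₃)

namespace NearMetric

/-- `(Y, ℓ)` is separable: there is a countable `ℓ`-dense sequence. -/
def Separable {Y : Type} (L : NearMetric Y) : Prop :=
  ∃ s : ℕ → Y, ∀ y : Y, ∀ ε : ℝ, 0 < ε → ∃ i : ℕ, L.loss (s i) y < ε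

/-- `0 < ℓ̄ < ∞`: the supremum of the loss is positive and finite. -/
def BoundedPos {Y : Type} (L : NearMetric Y) : Prop :=
  (∃ y₁ y₂, 0 < L.loss y₁ y₂) ∧ (∃ M : ℝ, ∀ y₁ y₂, L.loss y₁ y₂ ≤ M)

/-- The σ-algebra on `Y` generated by `ℓ`-balls. -/
def mSpace {Y : Type} (L : NearMetric Y) : MeasurableSpace Y :=
  MeasurableSpace.generateFrom {B | ∃ (y : Y) (ε : ℝ), B = {y' | L.loss y y' < ε}}

/-- Measurability of a map into `Y` with respect to the ball σ-algebra of `L`. -/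
def MeasurableFun {X Y : Type} [MeasurableSpace X] (L : NearMetric Y) (f : X → Y) : Prop :=
  @Measurable X Y _ L.mSpace f

end NearMetric

/-- The 0–1 loss on any type with decidable equality. -/
def l01 (Y : Type) [DecidableEq Y] : NearMetric Y where
  loss y₁ y₂ := if y₁ = y₂ then 0 else 1
  nonneg := by intro a b; split <;> norm_num
  symm := by intro a b; simp [eq_comm]
  eq_zero_iff := by intro a b; split <;> simp_all
  c := 1
  c_nonneg := by norm_num
  triangle := by
    intro a b c
    by_cases h1 : a = c <;> by_cases h2 : b = a <;> by_cases h3 : b = c <;>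
      simp_all

/-- An online learning rule: a sequence of measurable maps
`f t : 𝒳^t × 𝒴^t × 𝒳 → 𝒴` (the history at time `t+1` has length `t`). -/
def IsLearningRule {X Y : Type} [MeasurableSpace X] (L : NearMetric Y)
    (f : (t : ℕ) → (Fin t → X) → (Fin t → Y) → X → Y) : Prop :=
  letI : MeasurableSpace Y := L.mSpace
  ∀ t : ℕ, Measurable fun p : (Fin t → X) × (Fin t → Y) × X => f t p.1 p.2.1 p.2.2

/-- The average loss of learning rule `f` on target `fstar` under process `Xp`
up to horizon `T`, at sample `ω`. -/
noncomputable def avgLoss {X Y Ω : Type} (L : NearMetric Y) (Xp : ℕ → Ω → X)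
    (f : (t : ℕ) → (Fin t → X) → (Fin t → Y) → X → Y) (fstar : X → Y)
    (T : ℕ) (ω : Ω) : ℝ :=
  (T : ℝ)⁻¹ * ∑ t ∈ Finset.range T,
    L.loss (f t (fun i => Xp i.1 ω) (fun i => fstar (Xp i.1 ω)) (Xp t ω)) (fstar (Xp t ω))

/-- The rule `f` is (strongly) consistent for target `fstar` under the process `Xp`. -/
def Consistent {X Y Ω : Type} [MeasurableSpace Ω] (μ : Measure Ω) (L : NearMetric Y)
    (Xp : ℕ → Ω → X) (f : (t : ℕ) → (Fin t → X) → (Fin t → Y) → X → Y)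
    (fstar : X → Y) : Prop :=
  ∀ᵐ ω ∂μ, Tendsto (fun T => avgLoss L Xp f fstar T ω) atTop (𝓝 0)

/-- `Xp ∈ SUOL`: the process admits strong universal online learning for
the value space `(Y, L)`. -/
def SUOL {X Y Ω : Type} [MeasurableSpace X] [MeasurableSpace Ω] (μ : Measure Ω)
    (L : NearMetric Y) (Xp : ℕ → Ω → X) : Prop :=
  ∃ f : (t : ℕ) → (Fin t → X) → (Fin t → Y) → X → Y,
    IsLearningRule L f ∧
    ∀ fstar : X → Y, L.MeasurableFun fstar → Consistent μ L Xp f fstar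

/-- `(Y, L)` is totally bounded: for every `ε > 0` it is covered by finitely many
`ε`-balls. -/
def NearMetric.TotBounded {Y : Type} (L : NearMetric Y) : Prop :=
  ∀ ε : ℝ, 0 < ε → ∃ F : Finset Y, ∀ y : Y, ∃ y' ∈ F, L.loss y' y ≤ ε

/- ======================= helper lemmas ======================= -/

section Helpers

lemma measurable_comp_count {α β Z : Type*} [MeasurableSpace α] [MeasurableSpace β]
    [Countable Z] (φ : α → Z) (ψ : Z → β) (h : ∀ z, MeasurableSet (φ ⁻¹' {z})) :
    Measurable fun a => ψ (φ a) := by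
  intro S hS
  have hset : (fun a => ψ (φ a)) ⁻¹' S = ⋃ z ∈ {z : Z | ψ z ∈ S}, φ ⁻¹' {z} := by
    ext a
    simp only [Set.mem_preimage, Set.mem_iUnion, Set.mem_setOf_eq, Set.mem_singleton_iff]
    exact ⟨fun h' => ⟨φ a, h', rfl⟩, fun ⟨z, hz, he⟩ => he ▸ hz⟩
  rw [hset]
  exact MeasurableSet.biUnion (Set.to_countable _) fun z _ => h z

lemma tendsto_nat_sqrt_atTop : Tendsto Nat.sqrt atTop atTop := by
  apply tendsto_atTop_atTop.2
  intro K
  exact ⟨K * K, fun n hn => Nat.le_sqrt.2 hn⟩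

lemma tendsto_sqrt_div :
    Tendsto (fun T : ℕ => ((Nat.sqrt T : ℝ) + 1) / T) atTop (𝓝 0) := by
  have h2 : Tendsto (fun T : ℕ => 2 / ((Nat.sqrt T : ℝ))) atTop (𝓝 0) :=
    (tendsto_const_div_atTop_nhds_zero_nat 2).comp tendsto_nat_sqrt_atTop
  apply squeeze_zero' (g := fun T : ℕ => 2 / ((Nat.sqrt T : ℝ)))
  · filter_upwards [eventually_ge_atTop 1] with T hT
    positivity
  · filter_upwards [eventually_ge_atTop 1] with T hT
    have hs : 1 ≤ Nat.sqrt T := Nat.le_sqrt.2 (by omega)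
    have hs' : (1:ℝ) ≤ (Nat.sqrt T : ℝ) := by exact_mod_cast hs
    have hTpos : (0:ℝ) < T := by exact_mod_cast hT
    have hsq : ((Nat.sqrt T : ℝ)) * ((Nat.sqrt T : ℝ)) ≤ (T : ℝ) := by
      exact_mod_cast Nat.sqrt_le T
    rw [div_le_div_iff₀ hTpos (by linarith)]
    nlinarith
  · exact h2

end Helpers
section NM
namespace NearMetric
variable {Y : Type} (L : NearMetric Y)

lemma loss_self (y : Y) : L.loss y y = 0 := (L.eq_zero_iff y y).2 rfl

lemma one_le_c (h : ∃ y₁ y₂, 0 < L.loss y₁ y₂) : 1 ≤ L.c := by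
  obtain ⟨a, b, hab⟩ := h
  have ht := L.triangle a a b
  rw [L.loss_self a] at ht
  nlinarith

lemma measurableSet_ball (z : Y) (ε : ℝ) :
    MeasurableSet[L.mSpace] {y | L.loss z y < ε} :=
  MeasurableSpace.measurableSet_generateFrom ⟨z, ε, rfl⟩

lemma measurableSet_closedBall (z : Y) (ε : ℝ) :
    MeasurableSet[L.mSpace] {y | L.loss z y ≤ ε} := by
  have hset : {y | L.loss z y ≤ ε} = ⋂ n : ℕ, {y | L.loss z y < ε + ((n : ℝ) + 1)⁻¹} := by
    ext y
    simp only [Set.mem_setOf_eq, Set.mem_iInter]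
    constructor
    · intro h n
      have : (0:ℝ) < ((n:ℝ)+1)⁻¹ := by positivity
      linarith
    · intro h
      by_contra hlt
      push_neg at hlt
      obtain ⟨n, hn⟩ := exists_nat_one_div_lt (sub_pos.2 hlt)
      have := h n
      rw [one_div] at hn
      linarith
  rw [hset]
  exact MeasurableSet.iInter fun n => L.measurableSet_ball z _

lemma measurableSet_le (a b : Y) :
    MeasurableSet[L.mSpace] {y | L.loss a y ≤ L.loss b y} := by
  have hset : {y | L.loss a y ≤ L.loss b y} =
      ⋂ q : ℚ, ({y | L.loss b y < (q : ℝ)}ᶜ ∪ {y | L.loss a y < (q : ℝ)}) := by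
    ext y
    simp only [Set.mem_iInter, Set.mem_union, Set.mem_compl_iff, Set.mem_setOf_eq, not_lt]
    constructor
    · intro h q
      by_cases hq : L.loss b y < (q : ℝ)
      · exact Or.inr (lt_of_le_of_lt h hq)
      · exact Or.inl (not_lt.1 hq)
    · intro h
      by_contra hlt
      push_neg at hlt
      obtain ⟨q, hq1, hq2⟩ := exists_rat_btwn hlt
      rcases h q with h1 | h2
      · linarith
      · linarith
  rw [hset]
  exact MeasurableSet.iInter fun q =>
    ((L.measurableSet_ball b q).compl.union (L.measurableSet_ball a q))

end NearMetric

lemma l01_loss {Z : Type} [DecidableEq Z] (a b : Z) :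
    (l01 Z).loss a b = if a = b then 0 else 1 := rfl

lemma l01_loss_le_one {Z : Type} [DecidableEq Z] (a b : Z) : (l01 Z).loss a b ≤ 1 := by
  rw [l01_loss]; split <;> norm_num

lemma l01_loss_of_ne {Z : Type} [DecidableEq Z] {a b : Z} (h : a ≠ b) :
    (l01 Z).loss a b = 1 := by rw [l01_loss, if_neg h]

lemma l01_measurableSet {Z : Type} [DecidableEq Z] [Countable Z] (S : Set Z) :
    MeasurableSet[(l01 Z).mSpace] S := by
  have hsing : ∀ z : Z, MeasurableSet[(l01 Z).mSpace] {z} := by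
    intro z
    have hset : ({z} : Set Z) = {y | (l01 Z).loss z y < 1} := by
      ext y
      simp only [Set.mem_singleton_iff, Set.mem_setOf_eq, l01_loss]
      constructor
      · intro h; simp [h.symm]
      · intro h; by_contra hne; rw [if_neg (fun he => hne he.symm)] at h; linarith
    rw [hset]
    exact (l01 Z).measurableSet_ball z 1
  have hS : S = ⋃ z ∈ S, {z} := by simp
  rw [hS]
  exact MeasurableSet.biUnion (Set.to_countable S) fun z _ => hsing z

lemma measurable_of_l01_dom {Z β : Type} [DecidableEq Z] [Countable Z]
    {mβ : MeasurableSpace β} (f : Z → β) :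
    @Measurable Z β (l01 Z).mSpace mβ f := fun _ _ => l01_measurableSet _
lemma avgLoss_nonneg {X Y Ω : Type} (L : NearMetric Y) (Xp : ℕ → Ω → X)
    (f : (t : ℕ) → (Fin t → X) → (Fin t → Y) → X → Y) (fstar : X → Y)
    (T : ℕ) (ω : Ω) : 0 ≤ avgLoss L Xp f fstar T ω :=
  mul_nonneg (by positivity) (Finset.sum_nonneg fun _ _ => L.nonneg _ _)

lemma tendsto_zero_of_le_mul {u v : ℕ → ℝ} (C : ℝ) (hu0 : ∀ T, 0 ≤ u T)
    (huv : ∀ T, u T ≤ C * v T) (hv : Tendsto v atTop (𝓝 0)) :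
    Tendsto u atTop (𝓝 0) := by
  have h : Tendsto (fun T => C * v T) atTop (𝓝 0) := by
    simpa using hv.const_mul C
  exact squeeze_zero hu0 huv h
section Decode

variable {X Ω : Type} [MeasurableSpace X] [MeasurableSpace Ω]

lemma suol_decode {Y Z : Type} [DecidableEq Z] [Countable Z]
    (μ : Measure Ω) (Xp : ℕ → Ω → X) (L : NearMetric Y)
    (e : Z → Y) (dec : Y → Z) (δ : ℝ) (hδ : 0 < δ)
    (hmargin : ∀ (y : Y) (z : Z), dec y ≠ z → δ ≤ L.loss y (e z))
    (hfib : ∀ z, MeasurableSet[L.mSpace] (dec ⁻¹' {z}))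
    (h : SUOL μ L Xp) : SUOL μ (l01 Z) Xp := by
  obtain ⟨f, hf, hcons⟩ := h
  refine ⟨fun t xs zs x => dec (f t xs (fun i => e (zs i)) x), ?_, ?_⟩
  · intro t
    letI : MeasurableSpace Z := (l01 Z).mSpace
    letI : MeasurableSpace Y := L.mSpace
    have hmap : Measurable (fun p : (Fin t → X) × (Fin t → Z) × X =>
        ((p.1, fun i => e (p.2.1 i), p.2.2) : (Fin t → X) × (Fin t → Y) × X)) := by
      refine measurable_fst.prodMk (Measurable.prodMk ?_ measurable_snd.snd)
      refine measurable_pi_lambda _ fun i => ?_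
      exact (measurable_of_l01_dom e).comp ((measurable_pi_apply i).comp measurable_snd.fst)
    have hpred : Measurable (fun p : (Fin t → X) × (Fin t → Z) × X =>
        f t p.1 (fun i => e (p.2.1 i)) p.2.2) := (hf t).comp hmap
    exact measurable_comp_count
      (fun p : (Fin t → X) × (Fin t → Z) × X => dec (f t p.1 (fun i => e (p.2.1 i)) p.2.2))
      id (fun z => hpred (hfib z))
  · intro fstar hfstar
    have hme : L.MeasurableFun (fun x => e (fstar x)) := fun S hS =>
      hfstar (l01_measurableSet (e ⁻¹' S))
    filter_upwards [hcons _ hme] with ω hω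
    refine tendsto_zero_of_le_mul δ⁻¹ (fun T => avgLoss_nonneg _ _ _ _ _ _) (fun T => ?_) hω
    rw [avgLoss, avgLoss, mul_left_comm]
    refine mul_le_mul_of_nonneg_left ?_ (inv_nonneg.2 (Nat.cast_nonneg T))
    rw [Finset.mul_sum]
    refine Finset.sum_le_sum fun t _ => ?_
    set yh := f t (fun i : Fin t => Xp i.1 ω) (fun i => e (fstar (Xp i.1 ω))) (Xp t ω) with hyh
    by_cases hcase : dec yh = fstar (Xp t ω)
    · rw [l01_loss, if_pos hcase]
      have := L.nonneg yh (e (fstar (Xp t ω)))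
      positivity
    · rw [l01_loss_of_ne hcase]
      calc (1:ℝ) = δ⁻¹ * δ := by field_simp
        _ ≤ δ⁻¹ * L.loss yh (e (fstar (Xp t ω))) :=
            mul_le_mul_of_nonneg_left (hmargin yh _ hcase) (by positivity)

end Decode
section Core

open Finset

lemma core1 (l : ℕ → ℕ → ℝ) (h0 : ∀ k t, 0 ≤ l k t) (h1 : ∀ k t, l k t ≤ 1)
    (k : ℕ → ℕ) (hbd : ∀ t, k t ≤ Nat.sqrt t)
    (hsel : ∀ t, ∑ s ∈ Finset.range t, l (k t) s ≤ (t : ℝ) * (2:ℝ)⁻¹ ^ (k t))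
    (hev : ∀ K : ℕ, ∀ᶠ t in atTop, K ≤ k t) :
    Tendsto (fun T : ℕ => (T:ℝ)⁻¹ * ∑ t ∈ Finset.range T, l (k t) t) atTop (𝓝 0) := by
  rw [Metric.tendsto_atTop]
  intro ε hε
  obtain ⟨K₀, hK₀⟩ : ∃ K₀ : ℕ, (2:ℝ)⁻¹ ^ K₀ * 2 < ε / 2 := by
    obtain ⟨n, hn⟩ := exists_pow_lt_of_lt_one (show (0:ℝ) < ε/4 by linarith)
      (by norm_num : (2:ℝ)⁻¹ < 1)
    exact ⟨n, by linarith⟩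
  obtain ⟨t₀, ht₀⟩ := eventually_atTop.1 (hev K₀)
  -- main pointwise bound
  have key : ∀ T : ℕ, (∑ t ∈ Finset.range T, l (k t) t)
      ≤ (t₀ : ℝ) + ((T : ℝ) * ((2:ℝ)⁻¹ ^ K₀ * 2) + ((Nat.sqrt T : ℝ) + 1)) := by
    intro T
    have hsplit : ∑ t ∈ Finset.range T, l (k t) t
        = (∑ t ∈ (Finset.range T).filter (fun t => k t < K₀), l (k t) t)
        + ∑ t ∈ (Finset.range T).filter (fun t => ¬ (k t < K₀)), l (k t) t :=
      (Finset.sum_filter_add_sum_filter_not _ _ _).symm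
    have hpart1 : ∑ t ∈ (Finset.range T).filter (fun t => k t < K₀), l (k t) t ≤ (t₀ : ℝ) := by
      have hsub : (Finset.range T).filter (fun t => k t < K₀) ⊆ Finset.range t₀ := by
        intro t ht
        rcases Finset.mem_filter.1 ht with ⟨-, hklt⟩
        refine Finset.mem_range.2 ?_
        by_contra hge
        exact absurd (ht₀ t (by omega)) (by omega)
      calc ∑ t ∈ (Finset.range T).filter (fun t => k t < K₀), l (k t) t
          ≤ ∑ t ∈ (Finset.range T).filter (fun t => k t < K₀), 1 :=
            Finset.sum_le_sum fun t _ => h1 _ t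
        _ = (((Finset.range T).filter (fun t => k t < K₀)).card : ℝ) := by simp
        _ ≤ ((Finset.range t₀).card : ℝ) := by
            exact_mod_cast Nat.cast_le.2 (Finset.card_le_card hsub)
        _ = (t₀ : ℝ) := by simp
    have hmaps : ∀ t ∈ (Finset.range T).filter (fun t => ¬ (k t < K₀)),
        k t ∈ Finset.Icc K₀ (Nat.sqrt T) := by
      intro t ht
      rcases Finset.mem_filter.1 ht with ⟨htr, hk⟩
      refine Finset.mem_Icc.2 ⟨by omega, ?_⟩
      exact le_trans (hbd t) (Nat.sqrt_le_sqrt (le_of_lt (Finset.mem_range.1 htr)))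
    have hpart2 : ∑ t ∈ (Finset.range T).filter (fun t => ¬ (k t < K₀)), l (k t) t
        ≤ ∑ j ∈ Finset.Icc K₀ (Nat.sqrt T), ((T:ℝ) * (2:ℝ)⁻¹ ^ j + 1) := by
      rw [← Finset.sum_fiberwise_of_maps_to hmaps (fun t => l (k t) t)]
      refine Finset.sum_le_sum fun j _ => ?_
      set sj := ((Finset.range T).filter (fun t => ¬ (k t < K₀))).filter (fun t => k t = j)
        with hsj
      rcases sj.eq_empty_or_nonempty with he | hne
      · rw [he]
        simp only [Finset.sum_empty]
        positivity
      · set tm := sj.max' hne with htm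
        have htmmem := sj.max'_mem hne
        have hktm : k tm = j := (Finset.mem_filter.1 htmmem).2
        have htmT : tm < T :=
          Finset.mem_range.1 (Finset.mem_filter.1 (Finset.mem_filter.1 htmmem).1).1
        have hsub : sj ⊆ Finset.range (tm + 1) := fun t ht =>
          Finset.mem_range.2 (Nat.lt_succ_of_le (Finset.le_max' _ _ ht))
        calc ∑ t ∈ sj, l (k t) t
            = ∑ t ∈ sj, l j t :=
              Finset.sum_congr rfl fun t ht => by rw [(Finset.mem_filter.1 ht).2]
          _ ≤ ∑ t ∈ Finset.range (tm + 1), l j t :=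
              Finset.sum_le_sum_of_subset_of_nonneg hsub (fun t _ _ => h0 j t)
          _ = (∑ t ∈ Finset.range tm, l j t) + l j tm := Finset.sum_range_succ _ _
          _ ≤ (tm : ℝ) * (2:ℝ)⁻¹ ^ j + 1 := by
              refine add_le_add ?_ (h1 j tm)
              have := hsel tm
              rwa [hktm] at this
          _ ≤ (T : ℝ) * (2:ℝ)⁻¹ ^ j + 1 := by
              have h1' : (tm : ℝ) ≤ (T : ℝ) := by exact_mod_cast le_of_lt htmT
              have h2' : (0:ℝ) ≤ (2:ℝ)⁻¹ ^ j := by positivity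
              nlinarith
    have hgeom : ∑ j ∈ Finset.Icc K₀ (Nat.sqrt T), ((T:ℝ) * (2:ℝ)⁻¹ ^ j + 1)
        ≤ (T : ℝ) * ((2:ℝ)⁻¹ ^ K₀ * 2) + ((Nat.sqrt T : ℝ) + 1) := by
      rw [Finset.sum_add_distrib]
      refine add_le_add ?_ ?_
      · rw [← Finset.mul_sum]
        refine mul_le_mul_of_nonneg_left ?_ (Nat.cast_nonneg T)
        rw [← Finset.Ico_add_one_right_eq_Icc, Finset.sum_Ico_eq_sum_range]
        calc ∑ i ∈ Finset.range (Nat.sqrt T + 1 - K₀), (2:ℝ)⁻¹ ^ (K₀ + i)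
            = (2:ℝ)⁻¹ ^ K₀ * ∑ i ∈ Finset.range (Nat.sqrt T + 1 - K₀), (2:ℝ)⁻¹ ^ i := by
              rw [Finset.mul_sum]
              exact Finset.sum_congr rfl fun i _ => by rw [pow_add]
          _ ≤ (2:ℝ)⁻¹ ^ K₀ * 2 := by
              refine mul_le_mul_of_nonneg_left ?_ (by positivity)
              have := sum_geometric_two_le (Nat.sqrt T + 1 - K₀)
              simpa [one_div] using this
      · simp only [Finset.sum_const, nsmul_eq_mul, mul_one]
        have : (Finset.Icc K₀ (Nat.sqrt T)).card ≤ Nat.sqrt T + 1 := by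
          rw [Nat.card_Icc]
          omega
        exact_mod_cast this
    calc ∑ t ∈ Finset.range T, l (k t) t
        = _ + _ := hsplit
      _ ≤ (t₀ : ℝ) + ((T : ℝ) * ((2:ℝ)⁻¹ ^ K₀ * 2) + ((Nat.sqrt T : ℝ) + 1)) :=
          add_le_add hpart1 (le_trans hpart2 hgeom)
  -- pick large T
  have htend1 : Tendsto (fun T : ℕ => (t₀ : ℝ) / T) atTop (𝓝 0) :=
    tendsto_const_div_atTop_nhds_zero_nat _
  have hev2 : ∀ᶠ T : ℕ in atTop, (t₀ : ℝ) / T < ε / 8 ∧ ((Nat.sqrt T : ℝ) + 1) / T < ε / 8 := by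
    filter_upwards [htend1.eventually (gt_mem_nhds (by linarith : (0:ℝ) < ε/8)),
      tendsto_sqrt_div.eventually (gt_mem_nhds (by linarith : (0:ℝ) < ε/8))] with T hT1 hT2
    exact ⟨hT1, hT2⟩
  obtain ⟨N, hN⟩ := eventually_atTop.1 hev2
  refine ⟨max N 1, fun T hT => ?_⟩
  have hT1 : 1 ≤ T := le_trans (le_max_right _ _) hT
  have hTN := hN T (le_trans (le_max_left _ _) hT)
  have hTpos : (0:ℝ) < T := by exact_mod_cast hT1
  have havg0 : 0 ≤ (T:ℝ)⁻¹ * ∑ t ∈ Finset.range T, l (k t) t :=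
    mul_nonneg (by positivity) (Finset.sum_nonneg fun t _ => h0 _ t)
  rw [Real.dist_eq, sub_zero, abs_of_nonneg havg0]
  calc (T:ℝ)⁻¹ * ∑ t ∈ Finset.range T, l (k t) t
      ≤ (T:ℝ)⁻¹ * ((t₀ : ℝ) + ((T : ℝ) * ((2:ℝ)⁻¹ ^ K₀ * 2) + ((Nat.sqrt T : ℝ) + 1))) :=
        mul_le_mul_of_nonneg_left (key T) (by positivity)
    _ = (t₀ : ℝ) / T + ((2:ℝ)⁻¹ ^ K₀ * 2 + ((Nat.sqrt T : ℝ) + 1) / T) := by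
        field_simp
    _ < ε / 8 + (ε / 2 + ε / 8) := by
        have := hTN.1
        have := hTN.2
        have := hK₀
        linarith
    _ < ε := by linarith

end Core
section FinRule

noncomputable def selMinF {t : ℕ} (w : Fin t → Bool) : ℕ :=
  if h : (Finset.univ.filter fun j => w j = true).Nonempty then
    ((Finset.univ.filter fun j => w j = true).min' h).val else 0

lemma selMinF_eq {t n : ℕ} (w : Fin t → Bool) (hnt : n < t)
    (hcorr : ∀ (j : ℕ) (hj : j < t), j ≤ n → w ⟨j, hj⟩ = decide (n = j)) :
    selMinF w = n := by
  have hwn : w ⟨n, hnt⟩ = true := by rw [hcorr n hnt le_rfl]; simp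
  have hmem : (⟨n, hnt⟩ : Fin t) ∈ Finset.univ.filter fun j => w j = true := by
    simp [hwn]
  have hne : (Finset.univ.filter fun j : Fin t => w j = true).Nonempty := ⟨_, hmem⟩
  rw [selMinF, dif_pos hne]
  set m := (Finset.univ.filter fun j : Fin t => w j = true).min' hne with hm
  have hmmem := (Finset.univ.filter fun j : Fin t => w j = true).min'_mem hne
  have hwm : w m = true := (Finset.mem_filter.1 hmmem).2
  have hle : m ≤ (⟨n, hnt⟩ : Fin t) := Finset.min'_le _ _ hmem
  rcases lt_or_eq_of_le hle with hlt | heq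
  · exfalso
    have hmlt : m.val < n := hlt
    have hd := hcorr m.val m.isLt (le_of_lt hmlt)
    rw [Fin.eta] at hd
    rw [hd] at hwm
    simp only [decide_eq_true_eq] at hwm
    omega
  · rw [heq]
  
lemma selMinF_loss_bound {t n : ℕ} (w : Fin t → Bool) (b : ℕ → Bool)
    (hw : ∀ (j : ℕ) (hj : j < t), w ⟨j, hj⟩ = b j) :
    (l01 ℕ).loss (selMinF w) n ≤
      (if n < t then (0:ℝ) else 1) +
        ∑ j ∈ Finset.range (n+1), (l01 Bool).loss (b j) (decide (n = j)) := by
  have hsum0 : 0 ≤ ∑ j ∈ Finset.range (n+1), (l01 Bool).loss (b j) (decide (n = j)) :=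
    Finset.sum_nonneg fun j _ => (l01 Bool).nonneg _ _
  rcases lt_or_ge n t with hnt | hnt
  · rw [if_pos hnt]
    by_cases hall : ∀ j, j ≤ n → b j = decide (n = j)
    · have hsel : selMinF w = n :=
        selMinF_eq w hnt (fun j hj hle => by rw [hw j hj]; exact hall j hle)
      rw [hsel, l01_loss, if_pos rfl]
      linarith
    · push_neg at hall
      obtain ⟨j₀, hj₀, hne⟩ := hall
      have hterm : (l01 Bool).loss (b j₀) (decide (n = j₀)) = 1 := l01_loss_of_ne hne
      have hge : (1:ℝ) ≤ ∑ j ∈ Finset.range (n+1), (l01 Bool).loss (b j) (decide (n = j)) := by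
        rw [← hterm]
        have hmem : j₀ ∈ Finset.range (n+1) := Finset.mem_range.2 (by omega)
        exact Finset.single_le_sum (f := fun j => (l01 Bool).loss (b j) (decide (n = j)))
          (fun j _ => (l01 Bool).nonneg _ _) hmem
      have := l01_loss_le_one (selMinF w) n
      linarith
  · rw [if_neg (not_lt.2 hnt)]
    have := l01_loss_le_one (selMinF w) n
    linarith

noncomputable def finRule {X : Type} (f : (t : ℕ) → (Fin t → X) → (Fin t → Bool) → X → Bool) :
    (t : ℕ) → (Fin t → X) → (Fin t → ℕ) → X → ℕ :=
  fun t xs ns x => selMinF (fun j : Fin t => f t xs (fun i => decide (ns i = j.val)) x)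

variable {X Ω : Type} [MeasurableSpace X] [MeasurableSpace Ω]

lemma suol_fin (μ : Measure Ω) (Xp : ℕ → Ω → X) (h : SUOL μ (l01 Bool) Xp) :
    ∃ g : (t : ℕ) → (Fin t → X) → (Fin t → ℕ) → X → ℕ,
      IsLearningRule (l01 ℕ) g ∧
      ∀ (N : ℕ) (fstar : X → ℕ), (∀ x, fstar x < N) →
        (∀ n : ℕ, MeasurableSet (fstar ⁻¹' {n})) →
        Consistent μ (l01 ℕ) Xp g fstar := by
  obtain ⟨f, hf, hcons⟩ := h
  refine ⟨finRule f, ?_, ?_⟩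
  · intro t
    letI : MeasurableSpace ℕ := (l01 ℕ).mSpace
    letI : MeasurableSpace Bool := (l01 Bool).mSpace
    have hpred : ∀ j : Fin t, Measurable (fun p : (Fin t → X) × (Fin t → ℕ) × X =>
        f t p.1 (fun i => decide (p.2.1 i = j.val)) p.2.2) := by
      intro j
      have hmap : Measurable (fun p : (Fin t → X) × (Fin t → ℕ) × X =>
          ((p.1, fun i => decide (p.2.1 i = j.val), p.2.2) :
            (Fin t → X) × (Fin t → Bool) × X)) := by
        refine measurable_fst.prodMk (Measurable.prodMk ?_ measurable_snd.snd)
        refine measurable_pi_lambda _ fun i => ?_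
        exact (measurable_of_l01_dom (fun m : ℕ => decide (m = j.val))).comp
          ((measurable_pi_apply i).comp measurable_snd.fst)
      exact (hf t).comp hmap
    have hmc := measurable_comp_count
      (fun p : (Fin t → X) × (Fin t → ℕ) × X =>
        (fun j : Fin t => f t p.1 (fun i => decide (p.2.1 i = j.val)) p.2.2))
      (fun w => selMinF w) ?_
    · exact hmc
    · intro v
      have hset : (fun p : (Fin t → X) × (Fin t → ℕ) × X =>
          (fun j : Fin t => f t p.1 (fun i => decide (p.2.1 i = j.val)) p.2.2)) ⁻¹' {v}
          = ⋂ j : Fin t,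
            (fun p : (Fin t → X) × (Fin t → ℕ) × X =>
              f t p.1 (fun i => decide (p.2.1 i = j.val)) p.2.2) ⁻¹' {v j} := by
        ext p
        simp [funext_iff]
      rw [hset]
      exact MeasurableSet.iInter fun j => hpred j (l01_measurableSet {v j})
  · intro N fstar hN hmeas
    have hbt : ∀ j : ℕ, (l01 Bool).MeasurableFun (fun x => decide (fstar x = j)) := by
      intro j
      unfold NearMetric.MeasurableFun
      letI : MeasurableSpace Bool := (l01 Bool).mSpace
      have := measurable_comp_count (fun x => decide (fstar x = j)) (id : Bool → Bool) ?_
      · exact this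
      · intro z
        cases z
        · have hs : (fun x => decide (fstar x = j)) ⁻¹' {false} = (fstar ⁻¹' {j})ᶜ := by
            ext x; simp
          rw [hs]; exact (hmeas j).compl
        · have hs : (fun x => decide (fstar x = j)) ⁻¹' {true} = fstar ⁻¹' {j} := by
            ext x; simp
          rw [hs]; exact hmeas j
    have hae : ∀ᵐ ω ∂μ, ∀ j : ℕ, Tendsto
        (fun T => avgLoss (l01 Bool) Xp f (fun x => decide (fstar x = j)) T ω) atTop (𝓝 0) :=
      ae_all_iff.2 fun j => hcons _ (hbt j)
    filter_upwards [hae] with ω hω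
    have hptw : ∀ T : ℕ, avgLoss (l01 ℕ) Xp (finRule f) fstar T ω ≤
        (N : ℝ) * (T:ℝ)⁻¹ + ∑ j ∈ Finset.range N,
          avgLoss (l01 Bool) Xp f (fun x => decide (fstar x = j)) T ω := by
      intro T
      have hterm : ∀ t ∈ Finset.range T,
          (l01 ℕ).loss (finRule f t (fun i : Fin t => Xp i.1 ω)
              (fun i => fstar (Xp i.1 ω)) (Xp t ω)) (fstar (Xp t ω))
          ≤ (if t < N then (1:ℝ) else 0) + ∑ j ∈ Finset.range N,
              (l01 Bool).loss (f t (fun i : Fin t => Xp i.1 ω)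
                (fun i => decide (fstar (Xp i.1 ω) = j)) (Xp t ω))
                (decide (fstar (Xp t ω) = j)) := by
        intro t _
        have hb := selMinF_loss_bound (t := t) (n := fstar (Xp t ω))
          (fun j : Fin t => f t (fun i : Fin t => Xp i.1 ω)
            (fun i => decide (fstar (Xp i.1 ω) = j.val)) (Xp t ω))
          (fun j : ℕ => f t (fun i : Fin t => Xp i.1 ω)
            (fun i => decide (fstar (Xp i.1 ω) = j)) (Xp t ω))
          (fun j hj => rfl)
        refine le_trans hb (add_le_add ?_ ?_)
        · by_cases h1 : fstar (Xp t ω) < t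
          · rw [if_pos h1]
            split <;> norm_num
          · rw [if_neg h1, if_pos (by have := hN (Xp t ω); omega)]
        · refine Finset.sum_le_sum_of_subset_of_nonneg ?_
            (fun j _ _ => (l01 Bool).nonneg _ _)
          exact Finset.range_subset_range.2 (by have := hN (Xp t ω); omega)
      calc avgLoss (l01 ℕ) Xp (finRule f) fstar T ω
          ≤ (T:ℝ)⁻¹ * ∑ t ∈ Finset.range T, ((if t < N then (1:ℝ) else 0)
              + ∑ j ∈ Finset.range N,
              (l01 Bool).loss (f t (fun i : Fin t => Xp i.1 ω)
                (fun i => decide (fstar (Xp i.1 ω) = j)) (Xp t ω))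
                (decide (fstar (Xp t ω) = j))) := by
            rw [avgLoss]
            exact mul_le_mul_of_nonneg_left (Finset.sum_le_sum hterm) (by positivity)
        _ ≤ (N : ℝ) * (T:ℝ)⁻¹ + ∑ j ∈ Finset.range N,
              avgLoss (l01 Bool) Xp f (fun x => decide (fstar x = j)) T ω := by
            rw [Finset.sum_add_distrib, mul_add]
            refine add_le_add ?_ ?_
            · have hind : ∑ t ∈ Finset.range T, (if t < N then (1:ℝ) else 0) ≤ (N : ℝ) := by
                have hcard : ((Finset.range T).filter (fun t => t < N)).card ≤ N := by
                  calc ((Finset.range T).filter (fun t => t < N)).card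
                      ≤ (Finset.range N).card := Finset.card_le_card
                        (fun t ht => Finset.mem_range.2 (Finset.mem_filter.1 ht).2)
                    _ = N := Finset.card_range N
                rw [Finset.sum_boole]
                exact_mod_cast hcard
              calc (T:ℝ)⁻¹ * ∑ t ∈ Finset.range T, (if t < N then (1:ℝ) else 0)
                  ≤ (T:ℝ)⁻¹ * (N:ℝ) := mul_le_mul_of_nonneg_left hind (by positivity)
                _ = (N : ℝ) * (T:ℝ)⁻¹ := mul_comm _ _
            · rw [Finset.sum_comm, Finset.mul_sum]
              refine le_of_eq (Finset.sum_congr rfl fun j _ => ?_)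
              rw [avgLoss]
    refine squeeze_zero (fun T => avgLoss_nonneg _ _ _ _ _ _) hptw ?_
    have ht1 : Tendsto (fun T : ℕ => (N : ℝ) * (T:ℝ)⁻¹) atTop (𝓝 0) := by
      have := tendsto_const_div_atTop_nhds_zero_nat (N : ℝ)
      simpa [div_eq_mul_inv] using this
    have ht2 : Tendsto (fun T : ℕ => ∑ j ∈ Finset.range N,
        avgLoss (l01 Bool) Xp f (fun x => decide (fstar x = j)) T ω) atTop (𝓝 0) := by
      have := tendsto_finset_sum (Finset.range N) (fun j _ => hω j)
      simpa using this
    simpa using ht1.add ht2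

end FinRule
section Master

noncomputable def cumL {X Y : Type} (g : (t : ℕ) → (Fin t → X) → (Fin t → ℕ) → X → ℕ)
    (q : ℕ → Y → ℕ) (t : ℕ) (xs : Fin t → X) (ys : Fin t → Y) (j : ℕ) : ℝ :=
  ∑ s : Fin t, (l01 ℕ).loss
    (g s.1 (fun i : Fin s.1 => xs ⟨i.1, i.2.trans s.2⟩)
      (fun i : Fin s.1 => q j (ys ⟨i.1, i.2.trans s.2⟩)) (xs s))
    (q j (ys s))

noncomputable def selScale {X Y : Type} (g : (t : ℕ) → (Fin t → X) → (Fin t → ℕ) → X → ℕ)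
    (q : ℕ → Y → ℕ) (t : ℕ) (xs : Fin t → X) (ys : Fin t → Y) : ℕ :=
  Nat.findGreatest (fun k => ∀ j ≤ k, cumL g q t xs ys j ≤ (t:ℝ) * (2:ℝ)⁻¹ ^ j)
    (Nat.sqrt t)

noncomputable def masterRule {X Y : Type} (g : (t : ℕ) → (Fin t → X) → (Fin t → ℕ) → X → ℕ)
    (q : ℕ → Y → ℕ) (r : ℕ → ℕ → Y) :
    (t : ℕ) → (Fin t → X) → (Fin t → Y) → X → Y :=
  fun t xs ys x =>
    r (selScale g q t xs ys) (g t xs (fun i => q (selScale g q t xs ys) (ys i)) x)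

variable {X Y : Type} (g : (t : ℕ) → (Fin t → X) → (Fin t → ℕ) → X → ℕ)
  (q : ℕ → Y → ℕ) {t : ℕ} (xs : Fin t → X) (ys : Fin t → Y)

lemma cumL_le_card (j : ℕ) : cumL g q t xs ys j ≤ (t : ℝ) := by
  unfold cumL
  calc (∑ s : Fin t, (l01 ℕ).loss _ _)
      ≤ ∑ _s : Fin t, (1:ℝ) := Finset.sum_le_sum fun s _ => l01_loss_le_one _ _
    _ = (t : ℝ) := by simp

lemma selScale_le_sqrt : selScale g q t xs ys ≤ Nat.sqrt t := by
  unfold selScale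
  exact Nat.findGreatest_le _

lemma selScale_spec (j : ℕ) (hj : j ≤ selScale g q t xs ys) :
    cumL g q t xs ys j ≤ (t:ℝ) * (2:ℝ)⁻¹ ^ j := by
  have hP : ∀ j' ≤ selScale g q t xs ys,
      cumL g q t xs ys j' ≤ (t:ℝ) * (2:ℝ)⁻¹ ^ j' := by
    have h0lem : ∀ j ≤ 0, cumL g q t xs ys j ≤ (t:ℝ) * (2:ℝ)⁻¹ ^ j := by
      intro j' hj'
      have hj0 : j' = 0 := Nat.le_zero.1 hj'
      subst hj0
      simpa using cumL_le_card g q xs ys 0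
    unfold selScale
    exact Nat.findGreatest_spec
      (P := fun k => ∀ j ≤ k, cumL g q t xs ys j ≤ (t:ℝ) * (2:ℝ)⁻¹ ^ j)
      (m := 0) (Nat.zero_le _) h0lem
  exact hP j hj

lemma selScale_ge (K : ℕ) (h1 : K ≤ Nat.sqrt t)
    (h2 : ∀ j ≤ K, cumL g q t xs ys j ≤ (t:ℝ) * (2:ℝ)⁻¹ ^ j) :
    K ≤ selScale g q t xs ys := by
  unfold selScale
  exact Nat.le_findGreatest h1 h2

lemma suol_encode {X Ω Y : Type} [MeasurableSpace X] [MeasurableSpace Ω]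
    (μ : Measure Ω) (Xp : ℕ → Ω → X) (L : NearMetric Y) (M : ℝ)
    (hM : ∀ y₁ y₂, L.loss y₁ y₂ ≤ M)
    (q : ℕ → Y → ℕ) (r : ℕ → ℕ → Y)
    (happ : ∀ k y, L.loss (r k (q k y)) y ≤ ((k:ℝ)+1)⁻¹)
    (hqfib : ∀ k n, MeasurableSet[L.mSpace] ((q k) ⁻¹' {n}))
    (g : (t : ℕ) → (Fin t → X) → (Fin t → ℕ) → X → ℕ)
    (hg : IsLearningRule (l01 ℕ) g)
    (hgc : ∀ (k : ℕ) (fstar : X → Y), L.MeasurableFun fstar →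
      Consistent μ (l01 ℕ) Xp g (fun x => q k (fstar x))) :
    SUOL μ L Xp := by
  refine ⟨masterRule g q r, ?_, ?_⟩
  · -- measurability
    intro t
    letI : MeasurableSpace Y := L.mSpace
    letI : MeasurableSpace ℕ := (l01 ℕ).mSpace
    have hq : ∀ k, Measurable (q k) := by
      intro k
      exact measurable_comp_count (q k) (id : ℕ → ℕ) (fun n => hqfib k n)
    have hG : ∀ k, Measurable (fun p : (Fin t → X) × (Fin t → Y) × X =>
        g t p.1 (fun i => q k (p.2.1 i)) p.2.2) := by
      intro k
      have hmap : Measurable (fun p : (Fin t → X) × (Fin t → Y) × X =>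
          ((p.1, fun i => q k (p.2.1 i), p.2.2) : (Fin t → X) × (Fin t → ℕ) × X)) := by
        refine measurable_fst.prodMk (Measurable.prodMk ?_ measurable_snd.snd)
        refine measurable_pi_lambda _ fun i => ?_
        exact (hq k).comp ((measurable_pi_apply i).comp measurable_snd.fst)
      exact (hg t).comp hmap
    have hcum : ∀ j, Measurable (fun p : (Fin t → X) × (Fin t → Y) × X =>
        cumL g q t p.1 p.2.1 j) := by
      intro j
      unfold cumL
      refine Finset.measurable_sum _ fun s _ => ?_
      have hmap2 : Measurable (fun p : (Fin t → X) × (Fin t → Y) × X =>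
          ((fun i : Fin s.1 => p.1 ⟨i.1, i.2.trans s.2⟩,
            fun i : Fin s.1 => q j (p.2.1 ⟨i.1, i.2.trans s.2⟩), p.1 s) :
            (Fin s.1 → X) × (Fin s.1 → ℕ) × X)) := by
        refine Measurable.prodMk ?_ (Measurable.prodMk ?_ ?_)
        · exact measurable_pi_lambda _ fun i => (measurable_pi_apply _).comp measurable_fst
        · refine measurable_pi_lambda _ fun i => ?_
          exact (hq j).comp ((measurable_pi_apply _).comp measurable_snd.fst)
        · exact (measurable_pi_apply s).comp measurable_fst
      have hpred : Measurable (fun p : (Fin t → X) × (Fin t → Y) × X =>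
          g s.1 (fun i : Fin s.1 => p.1 ⟨i.1, i.2.trans s.2⟩)
            (fun i : Fin s.1 => q j (p.2.1 ⟨i.1, i.2.trans s.2⟩)) (p.1 s)) :=
        (hg s.1).comp hmap2
      have hlab : Measurable (fun p : (Fin t → X) × (Fin t → Y) × X => q j (p.2.1 s)) :=
        (hq j).comp ((measurable_pi_apply s).comp measurable_snd.fst)
      refine measurable_comp_count
        (fun p : (Fin t → X) × (Fin t → Y) × X =>
          ((g s.1 (fun i : Fin s.1 => p.1 ⟨i.1, i.2.trans s.2⟩)
            (fun i : Fin s.1 => q j (p.2.1 ⟨i.1, i.2.trans s.2⟩)) (p.1 s),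
            q j (p.2.1 s)) : ℕ × ℕ))
        (fun z => (l01 ℕ).loss z.1 z.2) ?_
      intro z
      have hset : (fun p : (Fin t → X) × (Fin t → Y) × X =>
          ((g s.1 (fun i : Fin s.1 => p.1 ⟨i.1, i.2.trans s.2⟩)
            (fun i : Fin s.1 => q j (p.2.1 ⟨i.1, i.2.trans s.2⟩)) (p.1 s),
            q j (p.2.1 s)) : ℕ × ℕ)) ⁻¹' {z}
          = ((fun p : (Fin t → X) × (Fin t → Y) × X =>
              g s.1 (fun i : Fin s.1 => p.1 ⟨i.1, i.2.trans s.2⟩)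
                (fun i : Fin s.1 => q j (p.2.1 ⟨i.1, i.2.trans s.2⟩)) (p.1 s)) ⁻¹' {z.1})
            ∩ ((fun p : (Fin t → X) × (Fin t → Y) × X => q j (p.2.1 s)) ⁻¹' {z.2}) := by
        ext p
        simp [Prod.ext_iff]
      rw [hset]
      exact (hpred (l01_measurableSet {z.1})).inter (hlab (l01_measurableSet {z.2}))
    have hKge : ∀ k, MeasurableSet {p : (Fin t → X) × (Fin t → Y) × X |
        k ≤ selScale g q t p.1 p.2.1} := by
      intro k
      rcases Nat.eq_zero_or_pos k with h0 | hpos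
      · subst h0
        have : {p : (Fin t → X) × (Fin t → Y) × X | 0 ≤ selScale g q t p.1 p.2.1}
            = Set.univ := by
          ext p; simp
        rw [this]; exact MeasurableSet.univ
      · have hiff : ∀ p : (Fin t → X) × (Fin t → Y) × X,
            k ≤ selScale g q t p.1 p.2.1 ↔
              (k ≤ Nat.sqrt t ∧ ∀ j ≤ k,
                cumL g q t p.1 p.2.1 j ≤ (t:ℝ) * (2:ℝ)⁻¹ ^ j) := by
          intro p
          constructor
          · intro hk
            refine ⟨le_trans hk (selScale_le_sqrt g q p.1 p.2.1), fun j hj => ?_⟩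
            exact selScale_spec g q p.1 p.2.1 j (le_trans hj hk)
          · rintro ⟨h1, h2⟩
            exact selScale_ge g q p.1 p.2.1 k h1 h2
        by_cases hks : k ≤ Nat.sqrt t
        · have hset : {p : (Fin t → X) × (Fin t → Y) × X | k ≤ selScale g q t p.1 p.2.1}
              = ⋂ j ∈ Set.Iic k, {p : (Fin t → X) × (Fin t → Y) × X |
                  cumL g q t p.1 p.2.1 j ≤ (t:ℝ) * (2:ℝ)⁻¹ ^ j} := by
            ext p
            simp only [Set.mem_setOf_eq, Set.mem_iInter, Set.mem_Iic, hiff p, hks, true_and]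
          rw [hset]
          exact MeasurableSet.biInter (Set.to_countable _)
            (fun j _ => hcum j measurableSet_Iic)
        · have hset : {p : (Fin t → X) × (Fin t → Y) × X | k ≤ selScale g q t p.1 p.2.1}
              = ∅ := by
            ext p
            simp only [Set.mem_setOf_eq, Set.mem_empty_iff_false, iff_false]
            intro hk
            exact hks ((hiff p).1 hk).1
          rw [hset]; exact MeasurableSet.empty
    have hKfib : ∀ k, MeasurableSet {p : (Fin t → X) × (Fin t → Y) × X |
        selScale g q t p.1 p.2.1 = k} := by
      intro k
      have hset : {p : (Fin t → X) × (Fin t → Y) × X | selScale g q t p.1 p.2.1 = k}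
          = {p : (Fin t → X) × (Fin t → Y) × X | k ≤ selScale g q t p.1 p.2.1}
            \ {p : (Fin t → X) × (Fin t → Y) × X | k + 1 ≤ selScale g q t p.1 p.2.1} := by
        ext p
        simp only [Set.mem_setOf_eq, Set.mem_diff]
        omega
      rw [hset]
      exact (hKge k).diff (hKge (k+1))
    refine measurable_comp_count
      (fun p : (Fin t → X) × (Fin t → Y) × X =>
        ((selScale g q t p.1 p.2.1,
          g t p.1 (fun i => q (selScale g q t p.1 p.2.1) (p.2.1 i)) p.2.2) : ℕ × ℕ))
      (fun z : ℕ × ℕ => r z.1 z.2) ?_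
    intro z
    have hset : (fun p : (Fin t → X) × (Fin t → Y) × X =>
        ((selScale g q t p.1 p.2.1,
          g t p.1 (fun i => q (selScale g q t p.1 p.2.1) (p.2.1 i)) p.2.2) : ℕ × ℕ)) ⁻¹' {z}
        = {p : (Fin t → X) × (Fin t → Y) × X | selScale g q t p.1 p.2.1 = z.1}
          ∩ ((fun p : (Fin t → X) × (Fin t → Y) × X =>
              g t p.1 (fun i => q z.1 (p.2.1 i)) p.2.2) ⁻¹' {z.2}) := by
      ext p
      simp only [Set.mem_preimage, Set.mem_singleton_iff, Prod.ext_iff, Set.mem_inter_iff,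
        Set.mem_setOf_eq]
      constructor
      · rintro ⟨h1, h2⟩
        refine ⟨h1, ?_⟩
        rw [← h1]
        exact h2
      · rintro ⟨h1, h2⟩
        refine ⟨h1, ?_⟩
        rw [h1]
        exact h2
    rw [hset]
    exact (hKfib z.1).inter (hG z.1 (l01_measurableSet {z.2}))
  · -- consistency
    intro fstar hfstar
    have hae : ∀ᵐ ω ∂μ, ∀ k : ℕ, Tendsto
        (fun T => avgLoss (l01 ℕ) Xp g (fun x => q k (fstar x)) T ω) atTop (𝓝 0) :=
      ae_all_iff.2 fun k => hgc k fstar hfstar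
    filter_upwards [hae] with ω hω
    set ls : ℕ → ℕ → ℝ := fun j s => (l01 ℕ).loss
      (g s (fun i : Fin s => Xp i.1 ω) (fun i : Fin s => q j (fstar (Xp i.1 ω))) (Xp s ω))
      (q j (fstar (Xp s ω))) with hls
    set kk : ℕ → ℕ := fun u => selScale g q u (fun i : Fin u => Xp i.1 ω)
      (fun i : Fin u => fstar (Xp i.1 ω)) with hkk
    have hcum_eq : ∀ (u j : ℕ), cumL g q u (fun i : Fin u => Xp i.1 ω)
        (fun i : Fin u => fstar (Xp i.1 ω)) j = ∑ s ∈ Finset.range u, ls j s := by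
      intro u j
      rw [← Fin.sum_univ_eq_sum_range (fun s => ls j s) u]
      rfl
    have hF1 : ∀ j, Tendsto (fun T : ℕ => (T:ℝ)⁻¹ * ∑ s ∈ Finset.range T, ls j s)
        atTop (𝓝 0) := fun j => hω j
    have h0 : ∀ k u, 0 ≤ ls k u := fun k u => (l01 ℕ).nonneg _ _
    have h1 : ∀ k u, ls k u ≤ 1 := fun k u => l01_loss_le_one _ _
    have hbd : ∀ u, kk u ≤ Nat.sqrt u := fun u => selScale_le_sqrt g q _ _
    have hsel : ∀ u, ∑ s ∈ Finset.range u, ls (kk u) s ≤ (u:ℝ) * (2:ℝ)⁻¹ ^ (kk u) := by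
      intro u
      rw [← hcum_eq]
      exact selScale_spec g q _ _ (kk u) le_rfl
    have hev : ∀ K : ℕ, ∀ᶠ u in atTop, K ≤ kk u := by
      intro K
      have hev1 : ∀ᶠ u : ℕ in atTop, K ≤ Nat.sqrt u :=
        tendsto_nat_sqrt_atTop.eventually_ge_atTop K
      have h2 : ∀ j : ℕ, ∀ᶠ u : ℕ in atTop,
          ∑ s ∈ Finset.range u, ls j s ≤ (u:ℝ) * (2:ℝ)⁻¹ ^ j := by
        intro j
        have hpos : (0:ℝ) < (2:ℝ)⁻¹ ^ j := by positivity
        filter_upwards [(hF1 j).eventually (gt_mem_nhds hpos), eventually_ge_atTop 1]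
          with u hu hu1
        have hupos : (0:ℝ) < u := by exact_mod_cast hu1
        calc ∑ s ∈ Finset.range u, ls j s
            = (u:ℝ) * ((u:ℝ)⁻¹ * ∑ s ∈ Finset.range u, ls j s) := by
              field_simp
          _ ≤ (u:ℝ) * (2:ℝ)⁻¹ ^ j :=
              mul_le_mul_of_nonneg_left (le_of_lt hu) (le_of_lt hupos)
      have hall : ∀ᶠ u : ℕ in atTop, ∀ j ∈ Finset.range (K+1),
          ∑ s ∈ Finset.range u, ls j s ≤ (u:ℝ) * (2:ℝ)⁻¹ ^ j :=
        (Filter.eventually_all_finset _).2 fun j _ => h2 j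
      filter_upwards [hev1, hall] with u hu1 hu2
      refine selScale_ge g q _ _ K hu1 (fun j hj => ?_)
      rw [hcum_eq]
      exact hu2 j (Finset.mem_range.2 (by omega))
    have hper : ∀ u : ℕ, L.loss (masterRule g q r u (fun i : Fin u => Xp i.1 ω)
        (fun i : Fin u => fstar (Xp i.1 ω)) (Xp u ω)) (fstar (Xp u ω))
        ≤ L.c * M * ls (kk u) u + L.c * ((kk u : ℝ)+1)⁻¹ := by
      intro u
      have hrule : masterRule g q r u (fun i : Fin u => Xp i.1 ω)
          (fun i : Fin u => fstar (Xp i.1 ω)) (Xp u ω)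
          = r (kk u) (g u (fun i : Fin u => Xp i.1 ω)
              (fun i : Fin u => q (kk u) (fstar (Xp i.1 ω))) (Xp u ω)) := rfl
      rw [hrule]
      set p := g u (fun i : Fin u => Xp i.1 ω)
        (fun i : Fin u => q (kk u) (fstar (Xp i.1 ω))) (Xp u ω) with hp
      set y := fstar (Xp u ω) with hy
      have tri := L.triangle (r (kk u) p) (r (kk u) (q (kk u) y)) y
      have h2 := happ (kk u) y
      have h3 : L.loss (r (kk u) (q (kk u) y)) (r (kk u) p)
          ≤ M * (l01 ℕ).loss p (q (kk u) y) := by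
        by_cases hpq : p = q (kk u) y
        · rw [hpq, l01_loss, if_pos rfl, L.loss_self]
          simp
        · rw [l01_loss_of_ne hpq, mul_one]
          exact hM _ _
      have hlseq : (l01 ℕ).loss p (q (kk u) y) = ls (kk u) u := rfl
      rw [hlseq] at h3
      calc L.loss (r (kk u) p) y
          ≤ L.c * (L.loss (r (kk u) (q (kk u) y)) (r (kk u) p)
              + L.loss (r (kk u) (q (kk u) y)) y) := tri
        _ ≤ L.c * (M * ls (kk u) u + ((kk u : ℝ)+1)⁻¹) :=
            mul_le_mul_of_nonneg_left (add_le_add h3 h2) L.c_nonneg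
        _ = L.c * M * ls (kk u) u + L.c * ((kk u : ℝ)+1)⁻¹ := by ring
    have hb1 : Tendsto (fun T : ℕ => (T:ℝ)⁻¹ * ∑ u ∈ Finset.range T, ls (kk u) u)
        atTop (𝓝 0) := core1 ls h0 h1 kk hbd hsel hev
    have hb2 : Tendsto (fun T : ℕ => (T:ℝ)⁻¹ * ∑ u ∈ Finset.range T, ((kk u : ℝ)+1)⁻¹)
        atTop (𝓝 0) := by
      have hkt : Tendsto kk atTop atTop :=
        tendsto_atTop_atTop.2 fun K => eventually_atTop.1 (hev K)
      have hseq : Tendsto (fun u : ℕ => ((kk u : ℝ)+1)⁻¹) atTop (𝓝 0) := by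
        have hbase : Tendsto (fun n : ℕ => ((n:ℝ)+1)⁻¹) atTop (𝓝 0) := by
          have := tendsto_one_div_add_atTop_nhds_zero_nat (𝕜 := ℝ)
          simpa [one_div] using this
        exact hbase.comp hkt
      exact hseq.cesaro
    have hfinal : Tendsto (fun T : ℕ =>
        L.c * M * ((T:ℝ)⁻¹ * ∑ u ∈ Finset.range T, ls (kk u) u)
          + L.c * ((T:ℝ)⁻¹ * ∑ u ∈ Finset.range T, ((kk u : ℝ)+1)⁻¹)) atTop (𝓝 0) := by
      have := (hb1.const_mul (L.c * M)).add (hb2.const_mul L.c)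
      simpa using this
    refine squeeze_zero (fun T => avgLoss_nonneg _ _ _ _ _ _) (fun T => ?_) hfinal
    rw [avgLoss]
    calc (T:ℝ)⁻¹ * ∑ u ∈ Finset.range T,
          L.loss (masterRule g q r u (fun i : Fin u => Xp i.1 ω)
            (fun i : Fin u => fstar (Xp i.1 ω)) (Xp u ω)) (fstar (Xp u ω))
        ≤ (T:ℝ)⁻¹ * ∑ u ∈ Finset.range T,
            (L.c * M * ls (kk u) u + L.c * ((kk u : ℝ)+1)⁻¹) :=
          mul_le_mul_of_nonneg_left (Finset.sum_le_sum fun u _ => hper u) (by positivity)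
      _ = L.c * M * ((T:ℝ)⁻¹ * ∑ u ∈ Finset.range T, ls (kk u) u)
          + L.c * ((T:ℝ)⁻¹ * ∑ u ∈ Finset.range T, ((kk u : ℝ)+1)⁻¹) := by
          rw [Finset.sum_add_distrib, ← Finset.mul_sum, ← Finset.mul_sum]
          ring

end Master
section MainPieces

variable {X Ω : Type} [MeasurableSpace X] [MeasurableSpace Ω]

lemma suol_to_bool {Y : Type} (μ : Measure Ω) (Xp : ℕ → Ω → X) (L : NearMetric Y)
    (hbd : L.BoundedPos) (h : SUOL μ L Xp) : SUOL μ (l01 Bool) Xp := by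
  obtain ⟨y₁, y₂, hd⟩ := hbd.1
  have hc1 : 1 ≤ L.c := L.one_le_c ⟨y₁, y₂, hd⟩
  refine suol_decode μ Xp L (fun b => if b then y₁ else y₂)
    (fun y => decide (L.loss y₁ y ≤ L.loss y₂ y)) (L.loss y₁ y₂ / (2 * L.c))
    (div_pos hd (by linarith)) ?_ ?_ h
  · intro y z hne
    have htri := L.triangle y₁ y y₂
    have hs1 := L.symm y y₁
    have hs2 := L.symm y y₂
    rw [div_le_iff₀ (by linarith : (0:ℝ) < 2 * L.c)]
    cases z
    · -- e z = y₂ ; dec y = true, so loss y₁ y ≤ loss y₂ y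
      have hdy : L.loss y₁ y ≤ L.loss y₂ y := by
        by_contra hcon
        exact hne (by simp [hcon])
      simp only [if_neg Bool.false_ne_true, Bool.false_eq_true, if_false]
      nlinarith [L.c_nonneg]
    · -- e z = y₁ ; dec y = false, so ¬ (loss y₁ y ≤ loss y₂ y)
      have hdy : L.loss y₂ y ≤ L.loss y₁ y := by
        by_contra hcon
        push_neg at hcon
        exact hne (by simp [le_of_lt hcon])
      simp only [if_pos trivial, if_true]
      nlinarith [L.c_nonneg]
  · intro z
    cases z
    · have hset : (fun y => decide (L.loss y₁ y ≤ L.loss y₂ y)) ⁻¹' {false}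
          = {y | L.loss y₁ y ≤ L.loss y₂ y}ᶜ := by
        ext y; simp
      rw [hset]
      exact (L.measurableSet_le y₁ y₂).compl
    · have hset : (fun y => decide (L.loss y₁ y ≤ L.loss y₂ y)) ⁻¹' {true}
          = {y | L.loss y₁ y ≤ L.loss y₂ y} := by
        ext y; simp
      rw [hset]
      exact L.measurableSet_le y₁ y₂

lemma suol_to_nat {Y : Type} (μ : Measure Ω) (Xp : ℕ → Ω → X) (L : NearMetric Y)
    (hbd : L.BoundedPos) (hNTB : ¬ L.TotBounded) (h : SUOL μ L Xp) :
    SUOL μ (l01 ℕ) Xp := by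
  classical
  have hc1 : 1 ≤ L.c := L.one_le_c hbd.1
  rw [NearMetric.TotBounded] at hNTB
  push_neg at hNTB
  obtain ⟨ε, hε, hsp⟩ := hNTB
  choose w hw using hsp
  set ll : ℕ → List Y := fun n => Nat.rec [] (fun _ l => w l.toFinset :: l) n with hll
  set e : ℕ → Y := fun n => w (ll n).toFinset with he
  have hmem : ∀ n m, m < n → e m ∈ ll n := by
    intro n
    induction n with
    | zero => intro m hm; omega
    | succ n ih =>
      intro m hm
      have hlls : ll (n+1) = e n :: ll n := rfl
      rcases Nat.lt_succ_iff_lt_or_eq.1 hm with h' | h'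
      · rw [hlls]; exact List.mem_cons_of_mem _ (ih m h')
      · subst h'; rw [hlls]; exact List.mem_cons_self
  have hsep2 : ∀ m n, m < n → ε < L.loss (e m) (e n) := by
    intro m n hmn
    have h1 := hw (ll n).toFinset (e m) (List.mem_toFinset.2 (hmem n m hmn))
    exact h1
  have hsepAll : ∀ m n, m ≠ n → ε < L.loss (e m) (e n) := by
    intro m n hne
    rcases lt_or_gt_of_ne hne with h' | h'
    · exact hsep2 m n h'
    · rw [L.symm]; exact hsep2 n m h'
  have hδ : 0 < ε / (2 * L.c) := div_pos hε (by linarith)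
  refine suol_decode μ Xp L e
    (fun y => if hh : ∃ n, L.loss (e n) y < ε / (2 * L.c) then Nat.find hh else 0)
    (ε / (2 * L.c)) hδ ?_ ?_ h
  · intro y z hne
    by_contra hlt
    push_neg at hlt
    have hex : ∃ n, L.loss (e n) y < ε / (2 * L.c) := ⟨z, by rw [L.symm]; exact hlt⟩
    change (if hh : ∃ n, L.loss (e n) y < ε / (2 * L.c) then Nat.find hh else 0) ≠ z at hne
    rw [dif_pos hex] at hne
    have hspec := Nat.find_spec hex
    have hgt := hsepAll (Nat.find hex) z hne
    have htri := L.triangle (e (Nat.find hex)) y (e z)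
    have h1 : L.loss y (e (Nat.find hex)) < ε / (2 * L.c) := by
      rw [L.symm]; exact hspec
    have heq : L.c * (2 * (ε / (2 * L.c))) = ε := by
      field_simp
    nlinarith [L.c_nonneg]
  · intro n
    rcases Nat.eq_zero_or_pos n with h0 | hpos
    · subst h0
      have hset : (fun y => if hh : ∃ n, L.loss (e n) y < ε / (2 * L.c)
            then Nat.find hh else 0) ⁻¹' {0}
          = {y | L.loss (e 0) y < ε / (2 * L.c)}
            ∪ ⋂ m : ℕ, {y | L.loss (e m) y < ε / (2 * L.c)}ᶜ := by
        ext y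
        simp only [Set.mem_preimage, Set.mem_singleton_iff, Set.mem_union,
          Set.mem_setOf_eq, Set.mem_iInter, Set.mem_compl_iff]
        by_cases hex : ∃ n, L.loss (e n) y < ε / (2 * L.c)
        · rw [dif_pos hex, Nat.find_eq_iff hex]
          constructor
          · rintro ⟨h1, -⟩; exact Or.inl h1
          · rintro (h1 | h1)
            · exact ⟨h1, by omega⟩
            · exact absurd hex (by push_neg; exact fun m => not_lt.1 (h1 m))
        · rw [dif_neg hex]
          push_neg at hex
          simp only [true_iff]
          exact Or.inr fun m => not_lt.2 (hex m)
      rw [hset]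
      exact (L.measurableSet_ball _ _).union
        (MeasurableSet.iInter fun m => (L.measurableSet_ball _ _).compl)
    · have hset : (fun y => if hh : ∃ n, L.loss (e n) y < ε / (2 * L.c)
            then Nat.find hh else 0) ⁻¹' {n}
          = {y | L.loss (e n) y < ε / (2 * L.c)}
            ∩ ⋂ (m : ℕ) (_ : m < n), {y | L.loss (e m) y < ε / (2 * L.c)}ᶜ := by
        ext y
        simp only [Set.mem_preimage, Set.mem_singleton_iff, Set.mem_inter_iff,
          Set.mem_setOf_eq, Set.mem_iInter, Set.mem_compl_iff]
        by_cases hex : ∃ n, L.loss (e n) y < ε / (2 * L.c)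
        · rw [dif_pos hex, Nat.find_eq_iff hex]
        · rw [dif_neg hex]
          push_neg at hex
          constructor
          · intro h1; exact absurd h1 (by omega)
          · rintro ⟨h1, -⟩; exact absurd h1 (not_lt.2 (hex n))
      rw [hset]
      exact (L.measurableSet_ball _ _).inter
        (MeasurableSet.iInter fun m => MeasurableSet.iInter fun _ =>
          (L.measurableSet_ball _ _).compl)

end MainPieces
/-- Let `(Y, L)` be a separable near-metric value space with
`0 < ℓ̄ < ∞`. If it is totally bounded, then `SUOL_{(Y,L)} = SUOL_{({0,1},ℓ01)}`;
otherwise `SUOL_{(Y,L)} = SUOL_{(ℕ,ℓ01)}`. -/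
theorem suol_totally_bounded_dichotomy
    {𝒳 : Type} [MetricSpace 𝒳] [TopologicalSpace.SeparableSpace 𝒳]
    [MeasurableSpace 𝒳] [BorelSpace 𝒳]
    {Y : Type} (L : NearMetric Y) (hsep : L.Separable) (hbd : L.BoundedPos)
    {Ω : Type} [MeasurableSpace Ω] (μ : Measure Ω) [IsProbabilityMeasure μ]
    (Xp : ℕ → Ω → 𝒳) (hX : ∀ t, Measurable (Xp t)) :
    (L.TotBounded → (SUOL μ L Xp ↔ SUOL μ (l01 Bool) Xp)) ∧
    (¬ L.TotBounded → (SUOL μ L Xp ↔ SUOL μ (l01 ℕ) Xp)) := by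
  classical
  obtain ⟨Mb, hMb⟩ := hbd.2
  constructor
  · intro hTB
    constructor
    · exact fun h => suol_to_bool μ Xp L hbd h
    · intro hBool
      obtain ⟨y₁, y₂, hd⟩ := hbd.1
      have hnets : ∀ k : ℕ, ∃ F : Finset Y, ∀ y : Y,
          ∃ y' ∈ F, L.loss y' y ≤ ((k:ℝ)+1)⁻¹ := fun k => hTB _ (by positivity)
      choose F hF using hnets
      set r : ℕ → ℕ → Y := fun k i => ((F k).toList).getD i y₁ with hr
      have hex : ∀ (k : ℕ) (y : Y), ∃ i, L.loss (r k i) y ≤ ((k:ℝ)+1)⁻¹ ∧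
          i < ((F k).toList).length := by
        intro k y
        obtain ⟨y', hy'F, hy'⟩ := hF k y
        obtain ⟨i, hi, hieq⟩ := List.mem_iff_getElem.1 (Finset.mem_toList.2 hy'F)
        refine ⟨i, ?_, hi⟩
        rw [hr]
        simp only
        rw [List.getD_eq_getElem _ _ hi, hieq]
        exact hy'
      have hex' : ∀ (k : ℕ) (y : Y), ∃ i, L.loss (r k i) y ≤ ((k:ℝ)+1)⁻¹ :=
        fun k y => ⟨(hex k y).choose, (hex k y).choose_spec.1⟩
      set q : ℕ → Y → ℕ := fun k y => Nat.find (hex' k y) with hq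
      have happ : ∀ k y, L.loss (r k (q k y)) y ≤ ((k:ℝ)+1)⁻¹ :=
        fun k y => Nat.find_spec (hex' k y)
      have hqbd : ∀ k y, q k y < ((F k).toList).length := by
        intro k y
        have h1 : q k y ≤ (hex k y).choose :=
          Nat.find_min' (hex' k y) (hex k y).choose_spec.1
        exact lt_of_le_of_lt h1 (hex k y).choose_spec.2
      have hqfib : ∀ k n, MeasurableSet[L.mSpace] ((q k) ⁻¹' {n}) := by
        intro k n
        have hset : (q k) ⁻¹' {n} = {y | L.loss (r k n) y ≤ ((k:ℝ)+1)⁻¹}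
            ∩ ⋂ (m : ℕ) (_ : m < n), {y | L.loss (r k m) y ≤ ((k:ℝ)+1)⁻¹}ᶜ := by
          ext y
          simp only [Set.mem_preimage, Set.mem_singleton_iff, Set.mem_inter_iff,
            Set.mem_setOf_eq, Set.mem_iInter, Set.mem_compl_iff, hq]
          rw [Nat.find_eq_iff]
        rw [hset]
        refine (L.measurableSet_closedBall _ _).inter ?_
        exact MeasurableSet.iInter fun m => MeasurableSet.iInter fun _ =>
          (L.measurableSet_closedBall _ _).compl
      obtain ⟨g, hgL, hgC⟩ := suol_fin μ Xp hBool
      refine suol_encode μ Xp L Mb hMb q r happ hqfib g hgL ?_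
      intro k fstar hfstar
      refine hgC ((F k).toList).length (fun x => q k (fstar x))
        (fun x => hqbd k (fstar x)) (fun n => ?_)
      have hpre : (fun x => q k (fstar x)) ⁻¹' {n} = fstar ⁻¹' ((q k) ⁻¹' {n}) := rfl
      rw [hpre]
      exact hfstar (hqfib k n)
  · intro hNTB
    constructor
    · exact fun h => suol_to_nat μ Xp L hbd hNTB h
    · intro hNat
      obtain ⟨s, hs⟩ := hsep
      have hex : ∀ (k : ℕ) (y : Y), ∃ i, L.loss (s i) y < ((k:ℝ)+1)⁻¹ :=
        fun k y => hs y _ (by positivity)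
      set q : ℕ → Y → ℕ := fun k y => Nat.find (hex k y) with hq
      have happ : ∀ k y, L.loss ((fun _ => s) k (q k y)) y ≤ ((k:ℝ)+1)⁻¹ :=
        fun k y => le_of_lt (Nat.find_spec (hex k y))
      have hqfib : ∀ k n, MeasurableSet[L.mSpace] ((q k) ⁻¹' {n}) := by
        intro k n
        have hset : (q k) ⁻¹' {n} = {y | L.loss (s n) y < ((k:ℝ)+1)⁻¹}
            ∩ ⋂ (m : ℕ) (_ : m < n), {y | L.loss (s m) y < ((k:ℝ)+1)⁻¹}ᶜ := by
          ext y
          simp only [Set.mem_preimage, Set.mem_singleton_iff, Set.mem_inter_iff,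
            Set.mem_setOf_eq, Set.mem_iInter, Set.mem_compl_iff, hq]
          rw [Nat.find_eq_iff]
        rw [hset]
        refine (L.measurableSet_ball _ _).inter ?_
        exact MeasurableSet.iInter fun m => MeasurableSet.iInter fun _ =>
          (L.measurableSet_ball _ _).compl
      obtain ⟨g, hgL, hgC⟩ := hNat
      refine suol_encode μ Xp L Mb hMb q (fun _ => s) happ hqfib g hgL ?_
      intro k fstar hfstar
      refine hgC (fun x => q k (fstar x)) ?_
      unfold NearMetric.MeasurableFun
      letI : MeasurableSpace ℕ := (l01 ℕ).mSpace
      refine measurable_comp_count (fun x => q k (fstar x)) id ?_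
      intro n
      have hpre : (fun x => q k (fstar x)) ⁻¹' {n} = fstar ⁻¹' ((q k) ⁻¹' {n}) := rfl
      rw [hpre]
      exact hfstar (hqfib k n)
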